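/- (Elliptic estimate for the stationary Regge–Wheeler equation, regime λ ≫ τ.) For every c₂ ≥ 1 there is a constant C = C(c₂) > 0 with the following property. Let a < b, λ > 0, let V : [a,b] → ℝ be continuous with −c₂λ² ≤ V(x) ≤ −λ² for all x ∈ [a,b], and let u : ℝ → ℝ be twice continuously differentiable and compactly supported in (a,b). Set g(x) = u''(x) + V(x)u(x). Then λ^{3/2} sup_{x∈[a,b]} |u(x)| + λ^{1/2} sup_{x∈[a,b]} |u'(x)| ≤ C ‖g‖_{L²(a,b)}. -/

import Mathlib

open MeasureTheory Set

lemma aux_int_deriv_zero {f : ℝ → ℝ} (hf : ContDiff ℝ 1 f) (hK : HasCompactSupport f) :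
    ∫ x, deriv f x = 0 := by
  obtain ⟨c, hc⟩ := hK.isCompact.bddAbove
  have hsub : ∀ x, x ∉ Iic (c+1) → deriv f x = 0 := by
    intro x hx
    by_contra h
    have hx' : x ∈ tsupport f := support_deriv_subset (by simpa using h)
    exact hx (le_trans (hc hx') (by linarith))
  rw [← setIntegral_eq_integral_of_forall_compl_eq_zero hsub,
    hK.integral_Iic_deriv_eq hf]
  apply image_eq_zero_of_notMem_tsupport
  intro h; linarith [hc h]

lemma aux_cs {f g : ℝ → ℝ} (hf : Continuous f) (hg : Continuous g)
    (hKf : HasCompactSupport f) (hKg : HasCompactSupport g) :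
    ∫ x, |f x * g x| ≤ Real.sqrt (∫ x, f x ^ 2) * Real.sqrt (∫ x, g x ^ 2) := by
  have hpq : Real.HolderConjugate 2 2 := (Real.holderConjugate_iff_eq_conjExponent one_lt_two).mpr (by norm_num)
  have hmf : MemLp (fun x => |f x|) (ENNReal.ofReal 2) (volume : Measure ℝ) :=
    (hf.abs).memLp_of_hasCompactSupport (hKf.comp_left (g := fun t : ℝ => |t|) abs_zero)
  have hmg : MemLp (fun x => |g x|) (ENNReal.ofReal 2) (volume : Measure ℝ) :=
    (hg.abs).memLp_of_hasCompactSupport (hKg.comp_left (g := fun t : ℝ => |t|) abs_zero)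
  have h := MeasureTheory.integral_mul_le_Lp_mul_Lq_of_nonneg hpq
    (Filter.Eventually.of_forall fun x => abs_nonneg (f x))
    (Filter.Eventually.of_forall fun x => abs_nonneg (g x)) hmf hmg
  have e1 : ∫ x, |f x| * |g x| = ∫ x, |f x * g x| := by
    simp [abs_mul]
  have e2 : ∀ (h : ℝ → ℝ), (∫ x, |h x| ^ (2:ℝ)) = ∫ x, h x ^ 2 := by
    intro h; congr 1; funext x
    rw [show ((2:ℝ)) = ((2:ℕ):ℝ) by norm_num, Real.rpow_natCast, sq_abs]
  rw [e1, e2 f, e2 g] at h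
  calc ∫ x, |f x * g x| ≤ (∫ x, f x ^ 2) ^ ((1:ℝ)/2) * (∫ x, g x ^ 2) ^ ((1:ℝ)/2) := h
    _ = _ := by rw [Real.sqrt_eq_rpow, Real.sqrt_eq_rpow]

lemma aux_sq_le {s t : ℝ} (hs : 0 ≤ s) (ht : 0 ≤ t) (h : s ^ 2 ≤ t ^ 2) : s ≤ t := by
  nlinarith

set_option maxHeartbeats 1000000 in
theorem elliptic_estimate_regge_wheeler :
    ∀ c₂ : ℝ, 1 ≤ c₂ →
      ∃ C : ℝ, 0 < C ∧
        ∀ (a b lam : ℝ) (V u : ℝ → ℝ),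
          a < b → 0 < lam →
          ContinuousOn V (Set.Icc a b) →
          (∀ x ∈ Set.Icc a b, -c₂ * lam ^ 2 ≤ V x ∧ V x ≤ -lam ^ 2) →
          ContDiff ℝ 2 u →
          tsupport u ⊆ Set.Ioo a b →
          lam ^ ((3:ℝ)/2) * sSup ((fun x => |u x|) '' Set.Icc a b) +
              lam ^ ((1:ℝ)/2) * sSup ((fun x => |deriv u x|) '' Set.Icc a b)
            ≤ C * Real.sqrt (∫ x in Set.Ioo a b,
                (deriv (deriv u) x + V x * u x) ^ 2) := by
  intro c₂ hc₂
  refine ⟨Real.sqrt 2 + Real.sqrt (2*(1+c₂)), by positivity, ?_⟩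
  intro a b lam V u hab hlam hV hVbd hu hsupp
  -- regularity
  have hcu : Continuous u := hu.continuous
  have hdu : Differentiable ℝ u := hu.differentiable (by norm_num)
  have hu1 : ContDiff ℝ 1 u := hu.of_le (by norm_num)
  have hu2' : ContDiff ℝ (1+1) u := by norm_num; exact hu
  have hu' : ContDiff ℝ 1 (deriv u) := (contDiff_succ_iff_deriv.mp hu2').2.2
  have hdu' : Differentiable ℝ (deriv u) := hu'.differentiable one_ne_zero
  have hcu' : Continuous (deriv u) := hu'.continuous
  have hcu'' : Continuous (deriv (deriv u)) := (contDiff_one_iff_deriv.mp hu').2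
  -- vanishing outside Ioo a b
  have hts1 : tsupport (deriv u) ⊆ tsupport u :=
    closure_minimal support_deriv_subset (isClosed_tsupport u)
  have hts2 : tsupport (deriv (deriv u)) ⊆ tsupport u :=
    (closure_minimal support_deriv_subset (isClosed_tsupport (deriv u))).trans hts1
  have hu0 : ∀ x, x ∉ Ioo a b → u x = 0 := fun x hx =>
    image_eq_zero_of_notMem_tsupport fun h => hx (hsupp h)
  have hu'0 : ∀ x, x ∉ Ioo a b → deriv u x = 0 := fun x hx =>
    image_eq_zero_of_notMem_tsupport fun h => hx (hsupp (hts1 h))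
  have hu''0 : ∀ x, x ∉ Ioo a b → deriv (deriv u) x = 0 := fun x hx =>
    image_eq_zero_of_notMem_tsupport fun h => hx (hsupp (hts2 h))
  -- compact support maker
  have hKmk : ∀ {f : ℝ → ℝ}, (∀ x, x ∉ Ioo a b → f x = 0) → HasCompactSupport f := by
    intro f h
    exact HasCompactSupport.intro isCompact_Icc
      (fun x hx => h x (fun hm => hx (Ioo_subset_Icc_self hm)))
  have hKu : HasCompactSupport u := hKmk hu0
  have hKu' : HasCompactSupport (deriv u) := hKmk hu'0
  have mkint : ∀ {f : ℝ → ℝ}, Continuous f → (∀ x, x ∉ Ioo a b → f x = 0) →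
      Integrable f (volume : Measure ℝ) := fun hf h0 =>
    hf.integrable_of_hasCompactSupport (hKmk h0)
  -- continuity of V * u
  have hVu : Continuous (fun x => V x * u x) := by
    rw [continuous_iff_continuousAt]
    intro x
    by_cases hx : x ∈ Ioo a b
    · exact (hV.continuousAt (Icc_mem_nhds hx.1 hx.2)).mul hcu.continuousAt
    · have hO : (tsupport u)ᶜ ∈ nhds x :=
        (isClosed_tsupport u).isOpen_compl.mem_nhds (fun h => hx (hsupp h))
      have hEq : (fun x => V x * u x) =ᶠ[nhds x] (fun _ => (0:ℝ)) := by
        filter_upwards [hO] with y hy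
        simp [image_eq_zero_of_notMem_tsupport hy]
      exact continuousAt_const.congr hEq.symm
  have hKVu : HasCompactSupport (fun x => V x * u x) :=
    hKmk (fun x hx => by simp [hu0 x hx])
  set G : ℝ → ℝ := fun x => deriv (deriv u) x + V x * u x with hGdef
  have hcG : Continuous G := hcu''.add hVu
  have hG0 : ∀ x, x ∉ Ioo a b → G x = 0 := fun x hx => by
    simp [hGdef, hu0 x hx, hu''0 x hx]
  have hKG : HasCompactSupport G := hKmk hG0
  -- notation for integrals
  set A := ∫ x, u x ^ 2 with hAdef
  set B := ∫ x, (deriv u x) ^ 2 with hBdef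
  set Q := ∫ x, G x ^ 2 with hQdef
  have hA0 : 0 ≤ A := integral_nonneg fun x => sq_nonneg _
  have hB0 : 0 ≤ B := integral_nonneg fun x => sq_nonneg _
  have hQ0 : 0 ≤ Q := integral_nonneg fun x => sq_nonneg _
  set NA := Real.sqrt A with hNAdef
  set NB := Real.sqrt B with hNBdef
  set NG := Real.sqrt Q with hNGdef
  have hNA0 : 0 ≤ NA := Real.sqrt_nonneg _
  have hNB0 : 0 ≤ NB := Real.sqrt_nonneg _
  have hNG0 : 0 ≤ NG := Real.sqrt_nonneg _
  have hNA2 : NA ^ 2 = A := Real.sq_sqrt hA0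
  have hNB2 : NB ^ 2 = B := Real.sq_sqrt hB0
  have hNG2 : NG ^ 2 = Q := Real.sq_sqrt hQ0
  -- integration by parts : ∫ u'' u = -B
  have hI1 : ∫ x, (deriv (deriv u) x * u x + deriv u x * deriv u x) = 0 := by
    have h0 := aux_int_deriv_zero (f := fun x => deriv u x * u x) (hu'.mul hu1)
      (hKmk (fun x hx => by simp [hu0 x hx]))
    rw [← h0]
    congr 1; funext x
    rw [deriv_fun_mul (hdu' x) (hdu x)]
  have hIBP : ∫ x, deriv (deriv u) x * u x = -B := by
    have hadd := integral_add
      (mkint (hcu''.mul hcu) (fun x hx => by simp [hu0 x hx]))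
      (mkint (hcu'.mul hcu') (fun x hx => by rw [hu'0 x hx, mul_zero]))
      (f := fun x => deriv (deriv u) x * u x) (g := fun x => deriv u x * deriv u x)
    rw [hadd] at hI1
    have : ∫ x, deriv u x * deriv u x = B := by
      rw [hBdef]; congr 1; funext x; rw [pow_two]
    linarith [hI1, this]
  -- energy identity pieces
  have hGu : ∫ x, G x * u x = (∫ x, deriv (deriv u) x * u x) + ∫ x, (V x * u x) * u x := by
    have : (fun x => G x * u x) =
        fun x => deriv (deriv u) x * u x + (V x * u x) * u x := by
      funext x; simp [hGdef]; ring
    rw [this]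
    exact integral_add
      (mkint (hcu''.mul hcu) (fun x hx => by simp [hu0 x hx]))
      (mkint (hVu.mul hcu) (fun x hx => by simp [hu0 x hx]))
  have hW : 0 ≤ ∫ x, (-V x - lam^2) * u x ^ 2 := by
    apply integral_nonneg
    intro x
    by_cases hx : x ∈ Icc a b
    · exact mul_nonneg (by linarith [(hVbd x hx).2]) (sq_nonneg _)
    · have := hu0 x (fun h => hx (Ioo_subset_Icc_self h)); simp [this]
  have hWeq : ∫ x, (-V x - lam^2) * u x ^ 2
      = -(∫ x, (V x * u x) * u x) - lam^2 * A := by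
    have : (fun x => (-V x - lam^2) * u x ^ 2) =
        fun x => (-((V x * u x) * u x)) - lam^2 * u x ^ 2 := by
      funext x; ring
    have h1 : Integrable (fun x => -((V x * u x) * u x)) (volume : Measure ℝ) :=
      (mkint (hVu.mul hcu) (fun x hx => by simp [hu0 x hx])).neg
    have h2 : Integrable (fun x => lam^2 * u x ^ 2) (volume : Measure ℝ) :=
      (mkint (hcu.pow 2) (fun x hx => by simp [hu0 x hx])).const_mul _
    rw [this, integral_sub h1 h2, integral_neg, integral_const_mul]
  -- Cauchy-Schwarz bounds
  have hcsGu : -(∫ x, G x * u x) ≤ NG * NA := by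
    have h1 : -(∫ x, G x * u x) ≤ |∫ x, G x * u x| := neg_le_abs _
    have h2 : |∫ x, G x * u x| ≤ ∫ x, |G x * u x| := by
      simpa only [Real.norm_eq_abs] using
        norm_integral_le_integral_norm (μ := (volume : Measure ℝ)) (f := fun x => G x * u x)
    exact h1.trans (h2.trans (aux_cs hcG hcu hKG hKu))
  -- key energy inequality
  have key1 : lam^2 * A + B ≤ NG * NA := by
    have : lam^2 * A + B ≤ -(∫ x, G x * u x) := by
      rw [hGu, hIBP]
      linarith [hW, hWeq]
    linarith [this, hcsGu]
  -- norm bounds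
  have hNA1 : lam^2 * NA ≤ NG := by
    rcases eq_or_lt_of_le hNA0 with h | h
    · rw [← h, mul_zero]; exact hNG0
    · have h2 : lam^2 * NA * NA ≤ NG * NA := by nlinarith [key1, hNA2, hB0]
      exact le_of_mul_le_mul_right h2 h
  have hNB1 : lam * NB ≤ NG := by
    apply aux_sq_le (mul_nonneg hlam.le hNB0) hNG0
    have h1 : B ≤ NG * NA := by nlinarith [key1, hA0, sq_nonneg lam]
    have h2 : NG * (lam^2 * NA) ≤ NG * NG := mul_le_mul_of_nonneg_left hNA1 hNG0
    calc (lam * NB)^2 = lam^2 * B := by rw [mul_pow, hNB2]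
      _ ≤ NG ^ 2 := by nlinarith [h1, h2, sq_nonneg lam, hNG0]
  -- pointwise bound for u
  have hptu : ∀ x : ℝ, u x * u x ≤ 2 * (NA * NB) := by
    intro x
    set D : ℝ → ℝ := fun t => deriv u t * u t + u t * deriv u t with hDdef
    have hcD : Continuous D := (hcu'.mul hcu).add (hcu.mul hcu')
    have hD0 : ∀ t, t ∉ Ioo a b → D t = 0 := fun t ht => by
      simp [hDdef, hu0 t ht]
    have hderD : deriv (fun t => u t * u t) = D := by
      funext t; rw [hDdef]; exact deriv_mul (hdu t) (hdu t)
    have hftc := (hKmk (fun t ht => by simp [hu0 t ht]) :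
        HasCompactSupport (fun t => u t * u t)).integral_Iic_deriv_eq (hu1.mul hu1) x
    rw [hderD] at hftc
    have hintD : Integrable D (volume : Measure ℝ) := mkint hcD hD0
    have hintabsD : Integrable (fun t => |D t|) (volume : Measure ℝ) :=
      mkint hcD.abs (fun t ht => by rw [hD0 t ht, abs_zero])
    have hintsum : Integrable (fun t => |deriv u t * u t| + |u t * deriv u t|)
        (volume : Measure ℝ) :=
      (mkint (hcu'.mul hcu).abs (fun t ht => by simp [hu0 t ht])).add
        (mkint (hcu.mul hcu').abs (fun t ht => by simp [hu0 t ht]))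
    calc u x * u x = ∫ t in Iic x, D t := hftc.symm
      _ ≤ ∫ t in Iic x, |D t| :=
          integral_mono (hintD.restrict) (hintabsD.restrict) (fun t => le_abs_self _)
      _ ≤ ∫ t, |D t| :=
          setIntegral_le_integral hintabsD (Filter.Eventually.of_forall fun t => abs_nonneg _)
      _ ≤ ∫ t, (|deriv u t * u t| + |u t * deriv u t|) :=
          integral_mono hintabsD hintsum (fun t => abs_add_le _ _)
      _ = (∫ t, |deriv u t * u t|) + ∫ t, |u t * deriv u t| :=
          integral_add
            (mkint (hcu'.mul hcu).abs (fun t ht => by simp [hu0 t ht]))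
            (mkint (hcu.mul hcu').abs (fun t ht => by simp [hu0 t ht]))
      _ ≤ NB * NA + NA * NB :=
          add_le_add (aux_cs hcu' hcu hKu' hKu) (aux_cs hcu hcu' hKu hKu')
      _ = 2 * (NA * NB) := by ring
  -- pointwise bound for deriv u
  have hNVu : ∫ x, |(V x * u x) * deriv u x|
      ≤ (c₂ * lam^2 * NA) * NB := by
    have hcs := aux_cs hVu hcu' hKVu hKu'
    have hmono : ∫ x, (V x * u x)^2 ≤ ∫ x, (c₂ * lam^2)^2 * u x ^ 2 := by
      apply integral_mono
        (mkint (hVu.pow 2) (fun x hx => by simp [hu0 x hx]))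
        ((mkint (hcu.pow 2) (fun x hx => by simp [hu0 x hx])).const_mul _)
      intro x
      show (V x * u x)^2 ≤ (c₂ * lam^2)^2 * u x ^ 2
      by_cases hx : x ∈ Icc a b
      · obtain ⟨hl, hr⟩ := hVbd x hx
        have h1 : 0 < lam^2 := by positivity
        have h2 : (0:ℝ) ≤ c₂ * lam^2 := by nlinarith
        have hV2 : V x ^ 2 ≤ (c₂ * lam^2)^2 := by
          nlinarith [mul_nonneg (by linarith : (0:ℝ) ≤ c₂*lam^2 + V x)
            (by linarith : (0:ℝ) ≤ c₂*lam^2 - V x)]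
        nlinarith [mul_nonneg (sub_nonneg.2 hV2) (sq_nonneg (u x))]
      · have := hu0 x (fun h => hx (Ioo_subset_Icc_self h)); simp [this]
    have hsq : Real.sqrt (∫ x, (c₂ * lam^2)^2 * u x ^ 2) = c₂ * lam^2 * NA := by
      rw [integral_const_mul, Real.sqrt_mul (sq_nonneg _), Real.sqrt_sq (by positivity)]
    calc ∫ x, |(V x * u x) * deriv u x|
        ≤ Real.sqrt (∫ x, (V x * u x)^2) * NB := hcs
      _ ≤ (c₂ * lam^2 * NA) * NB := by
          apply mul_le_mul_of_nonneg_right _ hNB0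
          rw [← hsq]
          exact Real.sqrt_le_sqrt hmono
  have hptu' : ∀ x : ℝ, deriv u x * deriv u x
      ≤ 2 * (NG * NB) + 2 * ((c₂ * lam^2 * NA) * NB) := by
    intro x
    set D : ℝ → ℝ := fun t => deriv (deriv u) t * deriv u t + deriv u t * deriv (deriv u) t
      with hDdef
    have hcD : Continuous D := (hcu''.mul hcu').add (hcu'.mul hcu'')
    have hD0 : ∀ t, t ∉ Ioo a b → D t = 0 := fun t ht => by
      simp [hDdef, hu'0 t ht]
    have hderD : deriv (fun t => deriv u t * deriv u t) = D := by
      funext t; rw [hDdef]; exact deriv_mul (hdu' t) (hdu' t)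
    have hftc := (hKmk (fun t ht => by simp [hu'0 t ht]) :
        HasCompactSupport (fun t => deriv u t * deriv u t)).integral_Iic_deriv_eq
        (hu'.mul hu') x
    rw [hderD] at hftc
    have hintD : Integrable D (volume : Measure ℝ) := mkint hcD hD0
    have hintabsD : Integrable (fun t => |D t|) (volume : Measure ℝ) :=
      mkint hcD.abs (fun t ht => by rw [hD0 t ht, abs_zero])
    -- |u'' t * u' t| ≤ |G t * u' t| + |(V t * u t) * u' t|
    have hptw : ∀ t, |deriv (deriv u) t * deriv u t|
        ≤ |G t * deriv u t| + |(V t * u t) * deriv u t| := by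
      intro t
      have : deriv (deriv u) t * deriv u t
          = G t * deriv u t - (V t * u t) * deriv u t := by simp [hGdef]; ring
      rw [this]
      exact abs_sub _ _
    have hintGu' : Integrable (fun t => |G t * deriv u t|) (volume : Measure ℝ) :=
      mkint (hcG.mul hcu').abs (fun t ht => by simp [hu'0 t ht])
    have hintVuu' : Integrable (fun t => |(V t * u t) * deriv u t|) (volume : Measure ℝ) :=
      mkint ((hVu.mul hcu').abs) (fun t ht => by simp [hu'0 t ht])
    have hintpair : Integrable
        (fun t => |G t * deriv u t| + |(V t * u t) * deriv u t|) (volume : Measure ℝ) :=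
      mkint (((hcG.mul hcu').abs).add ((hVu.mul hcu').abs))
        (fun t ht => by simp [hu'0 t ht])
    have hintsum : Integrable
        (fun t => (|G t * deriv u t| + |(V t * u t) * deriv u t|)
          + (|G t * deriv u t| + |(V t * u t) * deriv u t|)) (volume : Measure ℝ) :=
      hintpair.add hintpair
    have hDptw : ∀ t, |D t| ≤ (|G t * deriv u t| + |(V t * u t) * deriv u t|)
          + (|G t * deriv u t| + |(V t * u t) * deriv u t|) := by
      intro t
      rw [hDdef]
      calc |deriv (deriv u) t * deriv u t + deriv u t * deriv (deriv u) t|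
          ≤ |deriv (deriv u) t * deriv u t| + |deriv u t * deriv (deriv u) t| := abs_add_le _ _
        _ = |deriv (deriv u) t * deriv u t| + |deriv (deriv u) t * deriv u t| := by
            rw [mul_comm]
        _ ≤ _ := add_le_add (hptw t) (hptw t)
    calc deriv u x * deriv u x = ∫ t in Iic x, D t := hftc.symm
      _ ≤ ∫ t in Iic x, |D t| :=
          integral_mono (hintD.restrict) (hintabsD.restrict) (fun t => le_abs_self _)
      _ ≤ ∫ t, |D t| :=
          setIntegral_le_integral hintabsD (Filter.Eventually.of_forall fun t => abs_nonneg _)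
      _ ≤ ∫ t, ((|G t * deriv u t| + |(V t * u t) * deriv u t|)
          + (|G t * deriv u t| + |(V t * u t) * deriv u t|)) :=
          integral_mono hintabsD hintsum hDptw
      _ = 2 * ((∫ t, |G t * deriv u t|) + ∫ t, |(V t * u t) * deriv u t|) := by
          rw [integral_add hintpair hintpair, integral_add hintGu' hintVuu']
          ring
      _ ≤ 2 * ((NG * NB) + (c₂ * lam^2 * NA) * NB) := by
          have := aux_cs hcG hcu' hKG hKu'
          linarith [this, hNVu]
      _ = 2 * (NG * NB) + 2 * ((c₂ * lam^2 * NA) * NB) := by ring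
  -- rpow arithmetic
  have hr3 : (lam ^ ((3:ℝ)/2))^2 = lam^3 := by
    rw [← Real.rpow_natCast (lam ^ ((3:ℝ)/2)) 2, ← Real.rpow_mul hlam.le]
    norm_num
  have hr1 : (lam ^ ((1:ℝ)/2))^2 = lam := by
    rw [← Real.rpow_natCast (lam ^ ((1:ℝ)/2)) 2, ← Real.rpow_mul hlam.le]
    norm_num
  have hrp3 : 0 < lam ^ ((3:ℝ)/2) := Real.rpow_pos_of_pos hlam _
  have hrp1 : 0 < lam ^ ((1:ℝ)/2) := Real.rpow_pos_of_pos hlam _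
  -- sup bounds pointwise
  have hsupu : ∀ x : ℝ, lam ^ ((3:ℝ)/2) * |u x| ≤ Real.sqrt 2 * NG := by
    intro x
    apply aux_sq_le (mul_nonneg hrp3.le (abs_nonneg _))
      (mul_nonneg (Real.sqrt_nonneg 2) hNG0)
    have hmm : (lam^2 * NA) * (lam * NB) ≤ NG * NG :=
      mul_le_mul hNA1 hNB1 (mul_nonneg hlam.le hNB0) hNG0
    calc (lam ^ ((3:ℝ)/2) * |u x|)^2 = lam^3 * (u x * u x) := by
          rw [mul_pow, hr3, sq_abs, pow_two]
      _ ≤ lam^3 * (2 * (NA * NB)) :=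
          mul_le_mul_of_nonneg_left (hptu x) (by positivity)
      _ ≤ 2 * (NG * NG) := by nlinarith [hmm]
      _ = (Real.sqrt 2 * NG)^2 := by
          rw [mul_pow, Real.sq_sqrt (by norm_num : (0:ℝ) ≤ 2), pow_two]
  have hsupu' : ∀ x : ℝ, lam ^ ((1:ℝ)/2) * |deriv u x| ≤ Real.sqrt (2*(1+c₂)) * NG := by
    intro x
    apply aux_sq_le (mul_nonneg hrp1.le (abs_nonneg _))
      (mul_nonneg (Real.sqrt_nonneg _) hNG0)
    have hm1 : NG * (lam * NB) ≤ NG * NG := mul_le_mul_of_nonneg_left hNB1 hNG0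
    have hm2 : (lam^2 * NA) * (lam * NB) ≤ NG * NG :=
      mul_le_mul hNA1 hNB1 (mul_nonneg hlam.le hNB0) hNG0
    have hc₂0 : (0:ℝ) < c₂ := lt_of_lt_of_le one_pos hc₂
    calc (lam ^ ((1:ℝ)/2) * |deriv u x|)^2 = lam * (deriv u x * deriv u x) := by
          rw [mul_pow, hr1, sq_abs, pow_two]
      _ ≤ lam * (2 * (NG * NB) + 2 * ((c₂ * lam^2 * NA) * NB)) :=
          mul_le_mul_of_nonneg_left (hptu' x) hlam.le
      _ ≤ 2 * (NG * NG) + 2 * c₂ * (NG * NG) := by nlinarith [hm1, hm2, hc₂0.le]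
      _ = (Real.sqrt (2*(1+c₂)) * NG)^2 := by
          rw [mul_pow, Real.sq_sqrt (by linarith : (0:ℝ) ≤ 2*(1+c₂)), pow_two]
          ring
  -- sSup bounds
  have hS1 : lam ^ ((3:ℝ)/2) * sSup ((fun x => |u x|) '' Icc a b)
      ≤ Real.sqrt 2 * NG := by
    have hm : sSup ((fun x => |u x|) '' Icc a b) ≤ (Real.sqrt 2 * NG) / lam ^ ((3:ℝ)/2) := by
      apply Real.sSup_le
      · rintro y ⟨x, hx, rfl⟩
        rw [le_div_iff₀ hrp3, mul_comm]
        exact hsupu x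
      · positivity
    calc lam ^ ((3:ℝ)/2) * sSup ((fun x => |u x|) '' Icc a b)
        ≤ lam ^ ((3:ℝ)/2) * ((Real.sqrt 2 * NG) / lam ^ ((3:ℝ)/2)) :=
          mul_le_mul_of_nonneg_left hm hrp3.le
      _ = Real.sqrt 2 * NG := by field_simp
  have hS2 : lam ^ ((1:ℝ)/2) * sSup ((fun x => |deriv u x|) '' Icc a b)
      ≤ Real.sqrt (2*(1+c₂)) * NG := by
    have hm : sSup ((fun x => |deriv u x|) '' Icc a b)
        ≤ (Real.sqrt (2*(1+c₂)) * NG) / lam ^ ((1:ℝ)/2) := by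
      apply Real.sSup_le
      · rintro y ⟨x, hx, rfl⟩
        rw [le_div_iff₀ hrp1, mul_comm]
        exact hsupu' x
      · positivity
    calc lam ^ ((1:ℝ)/2) * sSup ((fun x => |deriv u x|) '' Icc a b)
        ≤ lam ^ ((1:ℝ)/2) * ((Real.sqrt (2*(1+c₂)) * NG) / lam ^ ((1:ℝ)/2)) :=
          mul_le_mul_of_nonneg_left hm hrp1.le
      _ = Real.sqrt (2*(1+c₂)) * NG := by field_simp
  -- conclude
  have hQrw : (∫ x in Ioo a b, (deriv (deriv u) x + V x * u x) ^ 2) = Q := by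
    rw [hQdef]
    rw [setIntegral_eq_integral_of_forall_compl_eq_zero
      (f := fun x => (deriv (deriv u) x + V x * u x)^2)
      (fun x hx => by simp [hu0 x hx, hu''0 x hx])]
  rw [hQrw]
  calc lam ^ ((3:ℝ)/2) * sSup ((fun x => |u x|) '' Icc a b) +
      lam ^ ((1:ℝ)/2) * sSup ((fun x => |deriv u x|) '' Icc a b)
      ≤ Real.sqrt 2 * NG + Real.sqrt (2*(1+c₂)) * NG := add_le_add hS1 hS2
    _ = (Real.sqrt 2 + Real.sqrt (2*(1+c₂))) * NG := by ring
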